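/- With the super-transposition E_{ab}^t = (-1)^{[a]([b]+1)} θ_a θ_b E_{b̄ā} as above, the transposition is an involution (i.e. (E_{ab}^t)^t = E_{ab} for all a, b) if and only if (-1)^{[a]} θ_a θ_{ā} is a constant θ₀ ∈ {±1} independent of a. -/

import Mathlib

/-- The ℤ₂-grading: `[a] = 0` for `a ≤ M`, `[a] = 1` for `a > M` (0-indexed). -/
def gr (M N : ℕ) (a : Fin (M + N)) : ℕ := if (a : ℕ) < M then 0 else 1

/-- The index involution `ā`: `ā = M+1-a` for `a ≤ M`, `ā = 2M+N+1-a` for `a > M`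
(written 0-indexed). -/
def bar (M N : ℕ) (a : Fin (M + N)) : Fin (M + N) :=
  if h : (a : ℕ) < M then ⟨M - 1 - (a : ℕ), by omega⟩
  else ⟨2 * M + N - 1 - (a : ℕ), by have := a.isLt; omega⟩

/-- The super-transposition determined by `E_{ab}^t = (-1)^{[a]([b]+1)} θ_a θ_b E_{b̄ā}`,
extended linearly to matrices. -/
noncomputable def stransp (M N : ℕ) (θ : Fin (M + N) → ℂ)
    (A : Matrix (Fin (M + N)) (Fin (M + N)) ℂ) :
    Matrix (Fin (M + N)) (Fin (M + N)) ℂ :=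
  fun p q =>
    ((-1 : ℂ) ^ (gr M N (bar M N q) * (gr M N (bar M N p) + 1))
        * θ (bar M N q) * θ (bar M N p)) * A (bar M N q) (bar M N p)

lemma bar_bar (M N : ℕ) (a : Fin (M + N)) : bar M N (bar M N a) = a := by
  have := a.isLt
  unfold bar
  split_ifs with h1 h2 h3 <;> first | (apply Fin.ext; simp; omega) | (exfalso; simp at *; omega)

lemma gr_bar (M N : ℕ) (a : Fin (M + N)) : gr M N (bar M N a) = gr M N a := by
  have := a.isLt
  unfold gr bar
  split_ifs <;> first | rfl | (exfalso; simp at *; omega)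

lemma stransp_stransp (M N : ℕ) (θ : Fin (M + N) → ℂ)
    (A : Matrix (Fin (M + N)) (Fin (M + N)) ℂ) (p q : Fin (M + N)) :
    stransp M N θ (stransp M N θ A) p q =
      ((-1 : ℂ) ^ (gr M N p) * θ p * θ (bar M N p))
        * ((-1 : ℂ) ^ (gr M N q) * θ q * θ (bar M N q)) * A p q := by
  simp only [stransp, bar_bar, gr_bar]
  have h : (-1 : ℂ) ^ (gr M N q * (gr M N p + 1)) * (-1 : ℂ) ^ (gr M N p * (gr M N q + 1))
      = (-1 : ℂ) ^ (gr M N p) * (-1 : ℂ) ^ (gr M N q) := by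
    rw [← pow_add, show gr M N q * (gr M N p + 1) + gr M N p * (gr M N q + 1)
        = gr M N p + gr M N q + 2 * (gr M N p * gr M N q) by ring, pow_add, pow_add,
      pow_mul, neg_one_sq, one_pow, mul_one]
  calc ((-1:ℂ) ^ (gr M N q * (gr M N p + 1)) * θ (bar M N q) * θ (bar M N p)) *
        (((-1:ℂ) ^ (gr M N p * (gr M N q + 1)) * θ p * θ q) * A p q)
      = ((-1:ℂ) ^ (gr M N q * (gr M N p + 1)) * (-1:ℂ) ^ (gr M N p * (gr M N q + 1)))
        * θ (bar M N q) * θ (bar M N p) * θ p * θ q * A p q := by ring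
    _ = _ := by rw [h]; ring

/-- the super-transposition is an involution, i.e. `(E_{ab}^t)^t = E_{ab}`
for all `a, b`, if and only if `(-1)^{[a]} θ_a θ_{ā}` is a constant `θ₀ ∈ {±1}`
independent of `a`. -/
theorem stransp_involutive_iff (M N : ℕ) (θ : Fin (M + N) → ℂ)
    (hθ : ∀ a, θ a = 1 ∨ θ a = -1) :
    (∀ a b : Fin (M + N),
        stransp M N θ (stransp M N θ (Matrix.single a b (1 : ℂ)))
          = Matrix.single a b (1 : ℂ))
      ↔ ∃ θ₀ : ℂ, (θ₀ = 1 ∨ θ₀ = -1) ∧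
          ∀ a : Fin (M + N), (-1 : ℂ) ^ (gr M N a) * θ a * θ (bar M N a) = θ₀ := by
  set g : Fin (M + N) → ℂ := fun a => (-1 : ℂ) ^ (gr M N a) * θ a * θ (bar M N a) with hg
  have hg1 : ∀ a, g a = 1 ∨ g a = -1 := by
    intro a
    rcases hθ a with h1 | h1 <;> rcases hθ (bar M N a) with h2 | h2 <;>
      rcases Nat.even_or_odd (gr M N a) with h3 | h3 <;>
      simp [hg, h1, h2, h3.neg_one_pow]
  constructor
  · intro H
    rcases Nat.eq_zero_or_pos (M + N) with hMN | hMN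
    · exact ⟨1, Or.inl rfl, fun a => absurd a.isLt (by omega)⟩
    · set a₀ : Fin (M + N) := ⟨0, hMN⟩
      refine ⟨g a₀, hg1 a₀, fun a => ?_⟩
      have := congrFun (congrFun (H a a₀) a) a₀
      rw [stransp_stransp] at this
      simp [Matrix.single] at this
      have hga : g a * g a₀ = 1 := this
      show g a = g a₀
      rcases hg1 a₀ with h | h <;> rcases hg1 a with h' | h' <;>
        rw [h, h'] at hga ⊢ <;> norm_num at hga
  · rintro ⟨θ₀, hθ₀, hall⟩
    intro a b
    funext p q
    rw [stransp_stransp, hall, hall]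
    have : θ₀ * θ₀ = 1 := by rcases hθ₀ with h | h <;> simp [h]
    rw [this, one_mul]
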